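/- Let X take at most m values with p_i = P(X = i) and cumulative probabilities p̄_i = Σ_{j=1}^i p_j. Let φ(i) ≥ 0 be weights and 0 < β ≤ 1 satisfy Σ_{i=1}^m φ(i)[p̄_i − β i] ≥ 0. Then −Σ_{i=1}^m φ(i) p̄_i log p̄_i ≤ −(log β) Σ_{i=1}^m φ(i) p̄_i − Σ_{i=1}^m φ(i) p̄_i log i, with equality if and only if φ(i)[p̄_i − β i] = 0 for all i = 1,…,m. -/

import Mathlib

open Finset

theorem discrete_wcre_uniform_bound
    (m : ℕ) (p : ℕ → ℝ) (hp : ∀ i ∈ Icc 1 m, 0 ≤ p i)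
    (hsum : ∑ i ∈ Icc 1 m, p i = 1)
    (pbar : ℕ → ℝ) (hpbar : ∀ i, pbar i = ∑ j ∈ Icc 1 i, p j)
    (φ : ℕ → ℝ) (hφ : ∀ i, 0 ≤ φ i)
    (β : ℝ) (hβ0 : 0 < β) (hβ1 : β ≤ 1)
    (hcond : 0 ≤ ∑ i ∈ Icc 1 m, φ i * (pbar i - β * i)) :
    (-∑ i ∈ Icc 1 m, φ i * pbar i * Real.log (pbar i)
        ≤ -Real.log β * ∑ i ∈ Icc 1 m, φ i * pbar i
          - ∑ i ∈ Icc 1 m, φ i * pbar i * Real.log i) ∧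
    ((-∑ i ∈ Icc 1 m, φ i * pbar i * Real.log (pbar i)
        = -Real.log β * ∑ i ∈ Icc 1 m, φ i * pbar i
          - ∑ i ∈ Icc 1 m, φ i * pbar i * Real.log i) ↔
      ∀ i ∈ Icc 1 m, φ i * (pbar i - β * i) = 0) := by
  have hpb : ∀ i ∈ Icc 1 m, 0 ≤ pbar i := by
    intro i hi
    rw [hpbar]
    refine Finset.sum_nonneg fun j hj => hp j ?_
    rw [mem_Icc] at *
    exact ⟨hj.1, hj.2.trans hi.2⟩
  have key : ∀ i ∈ Icc 1 m,
      φ i * pbar i * Real.log (β * i / pbar i) ≤ φ i * (β * i - pbar i) ∧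
      (φ i * pbar i * Real.log (β * i / pbar i) = φ i * (β * i - pbar i) ↔
        φ i * (pbar i - β * i) = 0) := by
    intro i hi
    have hi1 : (1 : ℝ) ≤ (i : ℝ) := by exact_mod_cast (mem_Icc.mp hi).1
    have hβi : 0 < β * i := by nlinarith
    rcases eq_or_lt_of_le (hpb i hi) with h0 | hpos
    · refine ⟨?_, ?_⟩
      · rw [← h0]
        have : φ i * 0 * Real.log (β * i / 0) = 0 := by ring
        rw [this]
        have := hφ i
        nlinarith
      · rw [← h0]
        constructor
        · intro h; nlinarith [hφ i]
        · intro h; nlinarith [hφ i]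
    · have ht : 0 < β * i / pbar i := div_pos hβi hpos
      have hlog : Real.log (β * i / pbar i) ≤ β * i / pbar i - 1 :=
        Real.log_le_sub_one_of_pos ht
      have hpe : pbar i * (β * i / pbar i) = β * i := by
        field_simp
      refine ⟨?_, ?_⟩
      · have h1 : φ i * pbar i * Real.log (β * i / pbar i)
            ≤ φ i * pbar i * (β * i / pbar i - 1) := by
          have := mul_nonneg (hφ i) hpos.le
          nlinarith
        have h2 : φ i * pbar i * (β * i / pbar i - 1) = φ i * (β * i - pbar i) := by
          field_simp
        linarith
      · rcases eq_or_lt_of_le (hφ i) with hφ0 | hφpos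
        · rw [← hφ0]
          constructor <;> intro h <;> ring
        · constructor
          · intro h
            by_cases ht1 : β * i / pbar i = 1
            · have : pbar i = β * i := by
                field_simp at ht1; linarith
              rw [this]; ring
            · exfalso
              have hlt : Real.log (β * i / pbar i) < β * i / pbar i - 1 :=
                Real.log_lt_sub_one_of_pos ht ht1
              have h1 : φ i * pbar i * Real.log (β * i / pbar i)
                  < φ i * pbar i * (β * i / pbar i - 1) := by
                have := mul_pos hφpos hpos
                nlinarith
              have h2 : φ i * pbar i * (β * i / pbar i - 1) = φ i * (β * i - pbar i) := by
                field_simp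
              linarith
          · intro h
            have hpe2 : pbar i = β * i := by
              have : pbar i - β * i = 0 := by
                rcases mul_eq_zero.mp h with h' | h'
                · exact absurd h' (ne_of_gt hφpos)
                · exact h'
              linarith
            have : β * i / pbar i = 1 := by
              rw [hpe2]; field_simp
            rw [this, Real.log_one]
            rw [hpe2]; ring
  have hterm : ∀ i ∈ Icc 1 m,
      φ i * pbar i * Real.log (β * i / pbar i)
        = Real.log β * (φ i * pbar i) + φ i * pbar i * Real.log i
          - φ i * pbar i * Real.log (pbar i) := by
    intro i hi
    have hi1 : (1 : ℝ) ≤ (i : ℝ) := by exact_mod_cast (mem_Icc.mp hi).1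
    have hipos : (0 : ℝ) < i := by linarith
    rcases eq_or_lt_of_le (hpb i hi) with h0 | hpos
    · rw [← h0]; ring
    · rw [Real.log_div (by positivity) (ne_of_gt hpos), Real.log_mul (ne_of_gt hβ0) (ne_of_gt hipos)]
      ring
  have hDeq : ∑ i ∈ Icc 1 m, φ i * pbar i * Real.log (β * i / pbar i)
      = Real.log β * ∑ i ∈ Icc 1 m, φ i * pbar i
        + ∑ i ∈ Icc 1 m, φ i * pbar i * Real.log i
        - ∑ i ∈ Icc 1 m, φ i * pbar i * Real.log (pbar i) := by
    rw [Finset.sum_congr rfl hterm, Finset.mul_sum]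
    rw [← Finset.sum_add_distrib, ← Finset.sum_sub_distrib]
  have hSle : ∑ i ∈ Icc 1 m, φ i * (β * i - pbar i) ≤ 0 := by
    have : ∑ i ∈ Icc 1 m, φ i * (β * i - pbar i)
        = -∑ i ∈ Icc 1 m, φ i * (pbar i - β * i) := by
      rw [← Finset.sum_neg_distrib]
      exact Finset.sum_congr rfl fun i _ => by ring
    linarith
  have hDle : ∑ i ∈ Icc 1 m, φ i * pbar i * Real.log (β * i / pbar i)
      ≤ ∑ i ∈ Icc 1 m, φ i * (β * i - pbar i) :=
    Finset.sum_le_sum fun i hi => (key i hi).1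
  constructor
  · linarith
  · constructor
    · intro heq
      have hD0 : ∑ i ∈ Icc 1 m, φ i * pbar i * Real.log (β * i / pbar i) = 0 := by
        linarith
      have hslack : ∑ i ∈ Icc 1 m,
          (φ i * (β * i - pbar i) - φ i * pbar i * Real.log (β * i / pbar i)) = 0 := by
        rw [Finset.sum_sub_distrib, hD0]
        have h1 : ∑ i ∈ Icc 1 m, φ i * (β * i - pbar i) = 0 := by
          have h2 : (0:ℝ) ≤ ∑ i ∈ Icc 1 m, φ i * (β * i - pbar i) := by
            rw [← hD0]; exact hDle
          linarith
        rw [h1]; ring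
      have := (Finset.sum_eq_zero_iff_of_nonneg
        (fun i hi => by linarith [(key i hi).1])).mp hslack
      intro i hi
      exact (key i hi).2.mp (by linarith [this i hi])
    · intro hall
      have hD0 : ∑ i ∈ Icc 1 m, φ i * pbar i * Real.log (β * i / pbar i) = 0 := by
        refine Finset.sum_eq_zero fun i hi => ?_
        rcases eq_or_lt_of_le (hφ i) with hφ0 | hφpos
        · rw [← hφ0]; ring
        · have hpe2 : pbar i = β * i := by
            have h := hall i hi
            rcases mul_eq_zero.mp h with h' | h'
            · exact absurd h' (ne_of_gt hφpos)
            · linarith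
          have hi1 : (1 : ℝ) ≤ (i : ℝ) := by exact_mod_cast (mem_Icc.mp hi).1
          have hpos : 0 < pbar i := by rw [hpe2]; nlinarith
          have : β * i / pbar i = 1 := by rw [hpe2]; field_simp
          rw [this, Real.log_one]; ring
      linarith
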